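/- Let K be a subfield of ℂ and let f(x,y) = 10 x³y². If there exist r, s ∈ K with r² + s² = −1, then L_K(f) = 4; otherwise L_K(f) = 5. -/

import Mathlib

open MvPolynomial

/-- The `K`-rank (length) of a binary form `f` of degree `d` over a subfield `K` of `ℂ`:
the least number of `d`-th powers of linear forms over `K` of which `f` is a
`K`-linear combination (`⊤` if no such representation exists). -/
noncomputable def Lrank (K : Subfield ℂ) (d : ℕ) (f : MvPolynomial (Fin 2) ℂ) : ℕ∞ :=
  sInf { n : ℕ∞ | ∃ r : ℕ, n = (r : ℕ∞) ∧ ∃ lam al be : Fin r → ℂ,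
    (∀ j, lam j ∈ K ∧ al j ∈ K ∧ be j ∈ K) ∧
    f = ∑ j, MvPolynomial.C (lam j) *
      (MvPolynomial.C (al j) * X 0 + MvPolynomial.C (be j) * X 1) ^ d }

namespace RankAux

open Finset

lemma coeffpow (a b : ℂ) (k : ℕ) (hk : k ≤ 5) :
    ((Polynomial.C a * Polynomial.X + Polynomial.C b) ^ 5).coeff k
      = (Nat.choose 5 k : ℂ) * a ^ k * b ^ (5 - k) := by
  rw [add_pow]
  rw [Polynomial.finset_sum_coeff]
  have key : ∀ m ∈ Finset.range 6,
      ((Polynomial.C a * Polynomial.X) ^ m * Polynomial.C b ^ (5 - m) * (Nat.choose 5 m : Polynomial ℂ)).coeff k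
        = if k = m then (Nat.choose 5 m : ℂ) * a ^ m * b ^ (5 - m) else 0 := by
    intro m _
    have e : (Polynomial.C a * Polynomial.X) ^ m * Polynomial.C b ^ (5 - m) * (Nat.choose 5 m : Polynomial ℂ)
        = Polynomial.C ((Nat.choose 5 m : ℂ) * a ^ m * b ^ (5 - m)) * Polynomial.X ^ m := by
      rw [mul_pow, ← Polynomial.C_pow, ← Polynomial.C_pow, Polynomial.C_mul, Polynomial.C_mul,
        Polynomial.C_eq_natCast]
      ring
    rw [e, Polynomial.coeff_C_mul, Polynomial.coeff_X_pow]
    split <;> simp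
  rw [Finset.sum_congr rfl key]
  simp [Finset.sum_ite_eq, Nat.lt_succ_iff, hk]

lemma moments {r : ℕ} (lam al be : Fin r → ℂ)
    (hf : (MvPolynomial.C 10 * X 0 ^ 3 * X 1 ^ 2 : MvPolynomial (Fin 2) ℂ)
      = ∑ j, MvPolynomial.C (lam j) * (MvPolynomial.C (al j) * X 0 + MvPolynomial.C (be j) * X 1) ^ 5) :
    ∀ k, k ≤ 5 → ∑ j, lam j * al j ^ k * be j ^ (5 - k) = if k = 3 then 1 else 0 := by
  have h1 : ∀ t : ℂ, (10 : ℂ) * t ^ 3 = ∑ j, lam j * (al j * t + be j) ^ 5 := by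
    intro t
    have h := congrArg (MvPolynomial.eval ![t, 1]) hf
    simpa using h
  have h2 : (Polynomial.C (10:ℂ) * Polynomial.X ^ 3)
      = ∑ j, Polynomial.C (lam j) * (Polynomial.C (al j) * Polynomial.X + Polynomial.C (be j)) ^ 5 := by
    apply Polynomial.funext
    intro t
    rw [Polynomial.eval_finset_sum]
    simpa using h1 t
  intro k hk
  have h3 := congrArg (fun p => Polynomial.coeff p k) h2
  simp only [Polynomial.finset_sum_coeff, Polynomial.coeff_C_mul, Polynomial.coeff_X_pow,
    coeffpow _ _ k hk] at h3
  have h4 : ∑ j, lam j * ((Nat.choose 5 k : ℂ) * al j ^ k * be j ^ (5 - k))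
      = (Nat.choose 5 k : ℂ) * ∑ j, lam j * al j ^ k * be j ^ (5 - k) := by
    rw [Finset.mul_sum]
    exact Finset.sum_congr rfl fun j _ => by ring
  rw [h4] at h3
  have hch : (Nat.choose 5 k : ℂ) ≠ 0 := by
    simp [Nat.choose_eq_zero_iff]
    omega
  rcases eq_or_ne k 3 with hk3 | hk3
  · subst hk3
    simp only [if_pos rfl] at h3 ⊢
    have hc10 : (Nat.choose 5 3 : ℂ) = 10 := by norm_num [Nat.choose]
    rw [hc10] at h3
    field_simp at h3
    exact h3.symm
  · simp only [if_neg hk3] at h3 ⊢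
    rw [mul_zero] at h3
    rcases mul_eq_zero.mp h3.symm with h | h
    · exact absurd h hch
    · exact h

lemma cubic_kill {n : ℕ} (w g : Fin n → ℂ) (c0 c1 c2 : ℂ)
    (hcover : ∀ j, w j ≠ 0 → g j = c0 ∨ g j = c1 ∨ g j = c2)
    (h0 : ∑ j, w j = 0) (h1 : ∑ j, w j * g j ^ 1 = 0)
    (h2 : ∑ j, w j * g j ^ 2 = 0) (h3 : ∑ j, w j * g j ^ 3 = 1) : False := by
  have hE : ∑ j, w j * ((g j - c0) * (g j - c1) * (g j - c2)) = 0 := by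
    apply Finset.sum_eq_zero
    intro j _
    by_cases hw : w j = 0
    · simp [hw]
    · rcases hcover j hw with h | h | h <;> rw [h] <;> ring
  have hsplit : ∑ j, w j * ((g j - c0) * (g j - c1) * (g j - c2))
      = (∑ j, w j * g j ^ 3) - (c0 + c1 + c2) * (∑ j, w j * g j ^ 2)
        + (c0 * c1 + c0 * c2 + c1 * c2) * (∑ j, w j * g j ^ 1) - (c0 * c1 * c2) * (∑ j, w j) := by
    rw [Finset.mul_sum, Finset.mul_sum, Finset.mul_sum, ← Finset.sum_sub_distrib,
      ← Finset.sum_add_distrib, ← Finset.sum_sub_distrib]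
    exact Finset.sum_congr rfl fun j _ => by ring
  rw [hsplit, h0, h1, h2, h3] at hE
  norm_num at hE

lemma node_sum {r : ℕ} (lam al be : Fin r → ℂ) (k : ℕ) (hk : k ≤ 4) :
    ∑ j, (lam j * be j ^ 5) * (if be j = 0 then 0 else al j / be j) ^ k
      = ∑ j, lam j * al j ^ k * be j ^ (5 - k) := by
  apply Finset.sum_congr rfl
  intro j _
  by_cases h : be j = 0
  · rcases Nat.lt_or_ge k 5 with h5 | h5
    · simp [h, zero_pow, Nat.sub_ne_zero_of_lt h5]
    · omega
  · rw [if_neg h, div_pow, pow_sub₀ (be j) h (by omega : k ≤ 5)]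
    field_simp

lemma small_kill {r : ℕ} (hr : r ≤ 3) (lam al be : Fin r → ℂ)
    (hf : (MvPolynomial.C 10 * X 0 ^ 3 * X 1 ^ 2 : MvPolynomial (Fin 2) ℂ)
      = ∑ j, MvPolynomial.C (lam j) * (MvPolynomial.C (al j) * X 0 + MvPolynomial.C (be j) * X 1) ^ 5) :
    False := by
  have hM := moments lam al be hf
  set w : Fin r → ℂ := fun j => lam j * be j ^ 5 with hw
  set g : Fin r → ℂ := fun j => if be j = 0 then 0 else al j / be j with hg
  have hS : ∀ k, k ≤ 4 → ∑ j, w j * g j ^ k = if k = 3 then 1 else 0 := by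
    intro k hk
    rw [← hM k (by omega)]
    exact node_sum lam al be k hk
  set c : ℕ → ℂ := fun i => if h : i < r then g ⟨i, h⟩ else 0 with hc
  apply cubic_kill w g (c 0) (c 1) (c 2)
  · intro j _
    have hj3 : (j : ℕ) < 3 := lt_of_lt_of_le j.2 hr
    have : (j : ℕ) = 0 ∨ (j : ℕ) = 1 ∨ (j : ℕ) = 2 := by omega
    rcases this with h | h | h
    · left
      have hri : (0:ℕ) < r := h ▸ j.2
      have e : c 0 = g ⟨0, hri⟩ := dif_pos hri
      rw [e]
      exact congrArg g (Fin.ext h)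
    · right; left
      have hri : (1:ℕ) < r := h ▸ j.2
      have e : c 1 = g ⟨1, hri⟩ := dif_pos hri
      rw [e]
      exact congrArg g (Fin.ext h)
    · right; right
      have hri : (2:ℕ) < r := h ▸ j.2
      have e : c 2 = g ⟨2, hri⟩ := dif_pos hri
      rw [e]
      exact congrArg g (Fin.ext h)
  · simpa using hS 0 (by norm_num)
  · simpa using hS 1 (by norm_num)
  · simpa using hS 2 (by norm_num)
  · simpa using hS 3 (by norm_num)

lemma four_exists (K : Subfield ℂ) (lam al be : Fin 4 → ℂ)
    (hmem : ∀ j, lam j ∈ K ∧ al j ∈ K ∧ be j ∈ K)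
    (hf : (MvPolynomial.C 10 * X 0 ^ 3 * X 1 ^ 2 : MvPolynomial (Fin 2) ℂ)
      = ∑ j, MvPolynomial.C (lam j) * (MvPolynomial.C (al j) * X 0 + MvPolynomial.C (be j) * X 1) ^ 5) :
    ∃ r s : ℂ, r ∈ K ∧ s ∈ K ∧ r ^ 2 + s ^ 2 = -1 := by
  have hM := moments lam al be hf
  set w : Fin 4 → ℂ := fun j => lam j * be j ^ 5 with hw
  set g : Fin 4 → ℂ := fun j => if be j = 0 then 0 else al j / be j with hg
  have hS : ∀ k, k ≤ 4 → ∑ j, w j * g j ^ k = if k = 3 then 1 else 0 := by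
    intro k hk
    rw [← hM k (by omega)]
    exact node_sum lam al be k hk
  have hS0 : ∑ j, w j * g j ^ 0 = 0 := by simpa using hS 0 (by norm_num)
  have hS1 : ∑ j, w j * g j ^ 1 = 0 := by simpa using hS 1 (by norm_num)
  have hS2 : ∑ j, w j * g j ^ 2 = 0 := by simpa using hS 2 (by norm_num)
  have hS3 : ∑ j, w j * g j ^ 3 = 1 := by simpa using hS 3 (by norm_num)
  have hS4 : ∑ j, w j * g j ^ 4 = 0 := by simpa using hS 4 (by norm_num)
  have hS0' : ∑ j, w j = 0 := by simpa using hS0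
  have hwne : ∀ j, w j ≠ 0 := by
    intro j0 hj0
    fin_cases j0
    · exact cubic_kill w g (g 1) (g 2) (g 3)
        (fun j hw' => by fin_cases j <;> simp_all) hS0' hS1 hS2 hS3
    · exact cubic_kill w g (g 0) (g 2) (g 3)
        (fun j hw' => by fin_cases j <;> simp_all) hS0' hS1 hS2 hS3
    · exact cubic_kill w g (g 0) (g 1) (g 3)
        (fun j hw' => by fin_cases j <;> simp_all) hS0' hS1 hS2 hS3
    · exact cubic_kill w g (g 0) (g 1) (g 2)
        (fun j hw' => by fin_cases j <;> simp_all) hS0' hS1 hS2 hS3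
  have hbene : ∀ j, be j ≠ 0 := by
    intro j hbe
    exact hwne j (by simp [hw, hbe])
  have hS5 : ∑ j, w j * g j ^ 5 = 0 := by
    have h5 := hM 5 (by norm_num)
    simp only [if_neg (by norm_num : ¬ (5 = 3))] at h5
    rw [← h5]
    apply Finset.sum_congr rfl
    intro j _
    have hbj := hbene j
    have hbj5 : be j ^ 5 ≠ 0 := pow_ne_zero _ hbj
    rw [hg]
    simp only [if_neg hbj]
    rw [hw]
    field_simp
    ring
  rw [Fin.sum_univ_four] at hS0' hS1 hS2 hS3 hS4 hS5
  have he1 : g 0 + g 1 + g 2 + g 3 = 0 := by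
    linear_combination (-(g 0 + g 1 + g 2 + g 3)) * hS3 + hS4
      + (g 0*g 1 + g 0*g 2 + g 0*g 3 + g 1*g 2 + g 1*g 3 + g 2*g 3) * hS2
      - (g 0*g 1*g 2 + g 0*g 1*g 3 + g 0*g 2*g 3 + g 1*g 2*g 3) * hS1
      + (g 0*g 1*g 2*g 3) * hS0'
  have he2 : g 0*g 1 + g 0*g 2 + g 0*g 3 + g 1*g 2 + g 1*g 3 + g 2*g 3 = 0 := by
    linear_combination (-(g 0*g 1 + g 0*g 2 + g 0*g 3 + g 1*g 2 + g 1*g 3 + g 2*g 3)) * hS3 - hS5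
      + (g 0 + g 1 + g 2 + g 3) * hS4
      + (g 0*g 1*g 2 + g 0*g 1*g 3 + g 0*g 2*g 3 + g 1*g 2*g 3) * hS2
      - (g 0*g 1*g 2*g 3) * hS1
  have hp2 : g 0^2 + g 1^2 + g 2^2 + g 3^2 = 0 := by
    linear_combination (g 0 + g 1 + g 2 + g 3) * he1 - 2 * he2
  have hkey : (g 0 - g 1)^2 + (g 2 - g 3)^2 = -2 * (g 0 + g 1)^2 := by
    linear_combination 2 * hp2 + (g 0 + g 1 - g 2 - g 3) * he1
  have hgK : ∀ j, g j ∈ K := by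
    intro j
    rw [hg]
    by_cases h : be j = 0
    · simp only [if_pos h]; exact K.zero_mem
    · simp only [if_neg h]
      exact K.div_mem (hmem j).2.1 (hmem j).2.2
  have h2K : (2:ℂ) ∈ K := by
    have := K.add_mem K.one_mem K.one_mem
    norm_num at this
    norm_num
  by_cases hu : g 0 + g 1 = 0
  · by_cases hd2 : g 2 - g 3 = 0
    · have h1 : g 0 - g 1 = 0 := by
        have hsq : (g 0 - g 1)^2 = 0 := by
          linear_combination hkey - (g 2 - g 3) * hd2 - (2*(g 0 + g 1) - 0) * hu
        exact pow_eq_zero_iff (by norm_num) |>.mp hsq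
      have hg0 : g 0 = 0 := by linear_combination (hu + h1) / 2
      have hg1 : g 1 = 0 := by linear_combination (hu - h1) / 2
      have hg2 : g 2 = 0 := by linear_combination (he1 + hd2 - hu) / 2
      have hg3 : g 3 = 0 := by linear_combination (he1 - hd2 - hu) / 2
      rw [hg0, hg1, hg2, hg3] at hS3
      norm_num at hS3
    · refine ⟨(g 0 - g 1) / (g 2 - g 3), 0,
        K.div_mem (K.sub_mem (hgK 0) (hgK 1)) (K.sub_mem (hgK 2) (hgK 3)), K.zero_mem, ?_⟩
      rw [hu] at hkey
      field_simp
      linear_combination hkey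
  · refine ⟨((g 0 - g 1) + (g 2 - g 3)) / (2 * (g 0 + g 1)),
      ((g 0 - g 1) - (g 2 - g 3)) / (2 * (g 0 + g 1)), ?_, ?_, ?_⟩
    · exact K.div_mem (K.add_mem (K.sub_mem (hgK 0) (hgK 1)) (K.sub_mem (hgK 2) (hgK 3)))
        (K.mul_mem h2K (K.add_mem (hgK 0) (hgK 1)))
    · exact K.div_mem (K.sub_mem (K.sub_mem (hgK 0) (hgK 1)) (K.sub_mem (hgK 2) (hgK 3)))
        (K.mul_mem h2K (K.add_mem (hgK 0) (hgK 1)))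
    · have h2u : (2:ℂ) * (g 0 + g 1) ≠ 0 := by
        simp [hu]
      field_simp
      linear_combination 2 * hkey

lemma cleared (b c x y : ℂ) (hb2 : b^2 + c^2 = -2) :
    (2-b-c)*((2-b+c)*(2*c))*((1+b)*x+y)^5 - (2+b-c)*((2+b+c)*(2*c))*((1-b)*x+y)^5
      + (2*b)*((2+b+c)*(2-b+c))*((-1+c)*x+y)^5 - (2*b)*((2+b-c)*(2-b-c))*((-1-c)*x+y)^5
    = 10*x^3*y^2*((2*b)*((2+b-c)*(2+b+c))*((2-b-c)*((2-b+c)*(2*c)))) := by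
  linear_combination (4*b*c*x^5*(16 - 8*c^2 + c^4 - 8*b^2 - 2*b^2*c^2 + b^4)) * hb2

set_option maxHeartbeats 1000000 in
lemma scalar4 (b c x y : ℂ) (hb2 : b^2 + c^2 = -2) (hb : b ≠ 0) (hc : c ≠ 0)
    (h13 : (2:ℂ)+b-c ≠ 0) (h14 : (2:ℂ)+b+c ≠ 0) (h23 : (2:ℂ)-b-c ≠ 0) (h24 : (2:ℂ)-b+c ≠ 0) :
    (1/((2*b)*((2+b-c)*(2+b+c))))*((1+b)*x+y)^5
      + (-(1/((2*b)*((2-b-c)*(2-b+c)))))*((1-b)*x+y)^5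
      + (1/(((2+b-c)*(2-b-c))*(2*c)))*((-1+c)*x+y)^5
      + (-(1/(((2+b+c)*(2-b+c))*(2*c))))*((-1-c)*x+y)^5 = 10*x^3*y^2 := by
  have h2b : (2:ℂ)*b ≠ 0 := by simp [hb]
  have h2c : (2:ℂ)*c ≠ 0 := by simp [hc]
  have hP1 : ((2:ℂ)*b)*((2+b-c)*(2+b+c)) ≠ 0 := mul_ne_zero h2b (mul_ne_zero h13 h14)
  have hP2 : ((2:ℂ)*b)*((2-b-c)*(2-b+c)) ≠ 0 := mul_ne_zero h2b (mul_ne_zero h23 h24)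
  have hP3 : (((2:ℂ)+b-c)*(2-b-c))*(2*c) ≠ 0 := mul_ne_zero (mul_ne_zero h13 h23) h2c
  have hP4 : (((2:ℂ)+b+c)*(2-b+c))*(2*c) ≠ 0 := mul_ne_zero (mul_ne_zero h14 h24) h2c
  have hD : ((2*b)*((2+b-c)*(2+b+c))*((2-b-c)*((2-b+c)*(2*c)))) ≠ 0 := by
    apply mul_ne_zero hP1
    exact mul_ne_zero h23 (mul_ne_zero h24 h2c)
  apply mul_right_cancel₀ hD
  rw [show ((1/((2*b)*((2+b-c)*(2+b+c))))*((1+b)*x+y)^5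
      + (-(1/((2*b)*((2-b-c)*(2-b+c)))))*((1-b)*x+y)^5
      + (1/(((2+b-c)*(2-b-c))*(2*c)))*((-1+c)*x+y)^5
      + (-(1/(((2+b+c)*(2-b+c))*(2*c))))*((-1-c)*x+y)^5)
      * ((2*b)*((2+b-c)*(2+b+c))*((2-b-c)*((2-b+c)*(2*c))))
    = ((2-b-c)*((2-b+c)*(2*c))*((1+b)*x+y)^5) * (((2*b)*((2+b-c)*(2+b+c)))/((2*b)*((2+b-c)*(2+b+c))))
      - ((2+b-c)*((2+b+c)*(2*c))*((1-b)*x+y)^5) * (((2*b)*((2-b-c)*(2-b+c)))/((2*b)*((2-b-c)*(2-b+c))))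
      + ((2*b)*((2+b+c)*(2-b+c))*((-1+c)*x+y)^5) * ((((2+b-c)*(2-b-c))*(2*c))/(((2+b-c)*(2-b-c))*(2*c)))
      - ((2*b)*((2+b-c)*(2-b-c))*((-1-c)*x+y)^5) * ((((2+b+c)*(2-b+c))*(2*c))/(((2+b+c)*(2-b+c))*(2*c)))
    from by ring]
  rw [div_self hP1, div_self hP2, div_self hP3, div_self hP4]
  rw [mul_one, mul_one, mul_one, mul_one]
  exact cleared b c x y hb2

lemma natmem (K : Subfield ℂ) : ∀ n : ℕ, ((n:ℂ)) ∈ K := by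
  intro n
  induction n with
  | zero => simpa using K.zero_mem
  | succ k ih => push_cast; exact K.add_mem ih K.one_mem

/-- 5-term rational representation -/
lemma rep5 (K : Subfield ℂ) :
    ∃ lam al be : Fin 5 → ℂ,
      (∀ j, lam j ∈ K ∧ al j ∈ K ∧ be j ∈ K) ∧
      (MvPolynomial.C 10 * X 0 ^ 3 * X 1 ^ 2 : MvPolynomial (Fin 2) ℂ)
        = ∑ j, MvPolynomial.C (lam j) * (MvPolynomial.C (al j) * X 0 + MvPolynomial.C (be j) * X 1) ^ 5 := by
  refine ⟨![5/2, 3/2, -(7/18), -(1/18), -(32/9)], ![0, 1, -1, 2, 1/2], fun _ => 1, ?_, ?_⟩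
  · intro j
    have hn := natmem K
    have h5 : ((5:ℂ)) ∈ K := by exact_mod_cast hn 5
    have h2 : ((2:ℂ)) ∈ K := by exact_mod_cast hn 2
    have h3 : ((3:ℂ)) ∈ K := by exact_mod_cast hn 3
    have h7 : ((7:ℂ)) ∈ K := by exact_mod_cast hn 7
    have h18 : ((18:ℂ)) ∈ K := by exact_mod_cast hn 18
    have h32 : ((32:ℂ)) ∈ K := by exact_mod_cast hn 32
    have h9 : ((9:ℂ)) ∈ K := by exact_mod_cast hn 9
    fin_cases j <;>
      exact ⟨by first
        | exact K.div_mem h5 h2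
        | exact K.div_mem h3 h2
        | exact K.neg_mem (K.div_mem h7 h18)
        | exact K.neg_mem (K.div_mem K.one_mem h18)
        | exact K.neg_mem (K.div_mem h32 h9),
        by first
        | exact K.zero_mem
        | exact K.one_mem
        | exact K.neg_mem K.one_mem
        | exact h2
        | exact K.div_mem K.one_mem h2, K.one_mem⟩
  · apply MvPolynomial.funext
    intro x
    rw [map_sum]
    simp only [Fin.sum_univ_five]
    simp [Matrix.cons_val_zero, Matrix.cons_val_one, Matrix.head_cons]
    ring

set_option maxHeartbeats 1600000 in
/-- 4-term representation from a good point on b²+c²=-2 -/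
lemma rep4 (K : Subfield ℂ) (b c : ℂ) (hbK : b ∈ K) (hcK : c ∈ K)
    (hb2 : b^2 + c^2 = -2) (hb : b ≠ 0) (hc : c ≠ 0) (hbc3 : b*c ≠ 3) (hbc3' : b*c ≠ -3) :
    ∃ lam al be : Fin 4 → ℂ,
      (∀ j, lam j ∈ K ∧ al j ∈ K ∧ be j ∈ K) ∧
      (MvPolynomial.C 10 * X 0 ^ 3 * X 1 ^ 2 : MvPolynomial (Fin 2) ℂ)
        = ∑ j, MvPolynomial.C (lam j) * (MvPolynomial.C (al j) * X 0 + MvPolynomial.C (be j) * X 1) ^ 5 := by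
  have h13 : (2:ℂ)+b-c ≠ 0 := by
    intro h
    apply hbc3'
    linear_combination (1/2)*hb2 + ((2+c-b)/2)*h
  have h14 : (2:ℂ)+b+c ≠ 0 := by
    intro h
    apply hbc3
    linear_combination (-1/2)*hb2 + ((-2+c+b)/2)*h
  have h23 : (2:ℂ)-b-c ≠ 0 := by
    intro h
    apply hbc3
    linear_combination (-1/2)*hb2 + ((-2-c-b)/2)*h
  have h24 : (2:ℂ)-b+c ≠ 0 := by
    intro h
    apply hbc3'
    linear_combination (1/2)*hb2 + ((2-c+b)/2)*h
  have h2K : (2:ℂ) ∈ K := by exact_mod_cast natmem K 2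
  have hm13 : (2:ℂ)+b-c ∈ K := K.sub_mem (K.add_mem h2K hbK) hcK
  have hm14 : (2:ℂ)+b+c ∈ K := K.add_mem (K.add_mem h2K hbK) hcK
  have hm23 : (2:ℂ)-b-c ∈ K := K.sub_mem (K.sub_mem h2K hbK) hcK
  have hm24 : (2:ℂ)-b+c ∈ K := K.add_mem (K.sub_mem h2K hbK) hcK
  have hm2b : (2:ℂ)*b ∈ K := K.mul_mem h2K hbK
  have hm2c : (2:ℂ)*c ∈ K := K.mul_mem h2K hcK
  refine ⟨![1/((2*b)*((2+b-c)*(2+b+c))), -(1/((2*b)*((2-b-c)*(2-b+c)))),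
      1/(((2+b-c)*(2-b-c))*(2*c)), -(1/(((2+b+c)*(2-b+c))*(2*c)))],
    ![1+b, 1-b, -1+c, -1-c], fun _ => 1, ?_, ?_⟩
  · intro j
    fin_cases j
    · exact ⟨K.div_mem K.one_mem (K.mul_mem hm2b (K.mul_mem hm13 hm14)),
        K.add_mem K.one_mem hbK, K.one_mem⟩
    · exact ⟨K.neg_mem (K.div_mem K.one_mem (K.mul_mem hm2b (K.mul_mem hm23 hm24))),
        K.sub_mem K.one_mem hbK, K.one_mem⟩
    · exact ⟨K.div_mem K.one_mem (K.mul_mem (K.mul_mem hm13 hm23) hm2c),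
        K.add_mem (K.neg_mem K.one_mem) hcK, K.one_mem⟩
    · exact ⟨K.neg_mem (K.div_mem K.one_mem (K.mul_mem (K.mul_mem hm14 hm24) hm2c)),
        K.sub_mem (K.neg_mem K.one_mem) hcK, K.one_mem⟩
  · apply MvPolynomial.funext
    intro x
    rw [map_sum]
    simp only [Fin.sum_univ_four, map_mul, map_add, map_pow, eval_C, eval_X,
      Matrix.cons_val_zero, Matrix.cons_val_one, Matrix.head_cons,
      Matrix.cons_val_two, Matrix.tail_cons, Matrix.cons_val_three, one_mul]
    exact (scalar4 b c (x 0) (x 1) hb2 hb hc h13 h14 h23 h24).symm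

/-- level ≤ 2 gives a good point on b²+c²=-2 -/
lemma good_point (K : Subfield ℂ) (r s : ℂ) (hrK : r ∈ K) (hsK : s ∈ K)
    (hrs : r^2 + s^2 = -1) :
    ∃ b c : ℂ, b ∈ K ∧ c ∈ K ∧ b^2 + c^2 = -2 ∧ b ≠ 0 ∧ c ≠ 0 ∧ b*c ≠ 3 ∧ b*c ≠ -3 := by
  have h5 : (5:ℂ) ≠ 0 := by norm_num
  have hmem : ∀ (t : ℂ) (u v : ℚ), t ∈ K → ((u:ℂ)*t/(v:ℂ)) ∈ K := by
    intro t u v ht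
    apply K.div_mem (K.mul_mem _ ht) _
    · exact_mod_cast SubfieldClass.ratCast_mem K u
    · exact_mod_cast SubfieldClass.ratCast_mem K v
  by_cases h1 : r^2 = -2
  · have hr0 : r ≠ 0 := fun h => by rw [h] at h1; norm_num at h1
    refine ⟨4*r/5, 3*r/5, ?_, ?_, ?_, ?_, ?_, ?_, ?_⟩
    · exact_mod_cast hmem r 4 5 hrK
    · exact_mod_cast hmem r 3 5 hrK
    · linear_combination h1
    · simp [hr0, h5]
    · simp [hr0, h5]
    · intro h; rw [show 4*r/5*(3*r/5) = 12*r^2/25 from by ring, h1] at h; norm_num at h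
    · intro h; rw [show 4*r/5*(3*r/5) = 12*r^2/25 from by ring, h1] at h; norm_num at h
  by_cases h2 : s^2 = -2
  · have hs0 : s ≠ 0 := fun h => by rw [h] at h2; norm_num at h2
    refine ⟨4*s/5, 3*s/5, ?_, ?_, ?_, ?_, ?_, ?_, ?_⟩
    · exact_mod_cast hmem s 4 5 hsK
    · exact_mod_cast hmem s 3 5 hsK
    · linear_combination h2
    · simp [hs0, h5]
    · simp [hs0, h5]
    · intro h; rw [show 4*s/5*(3*s/5) = 12*s^2/25 from by ring, h2] at h; norm_num at h
    · intro h; rw [show 4*s/5*(3*s/5) = 12*s^2/25 from by ring, h2] at h; norm_num at h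
  by_cases h3 : r^2 = -(1/2)
  · have hr0 : r ≠ 0 := fun h => by rw [h] at h3; norm_num at h3
    refine ⟨8*r/5, 6*r/5, ?_, ?_, ?_, ?_, ?_, ?_, ?_⟩
    · exact_mod_cast hmem r 8 5 hrK
    · exact_mod_cast hmem r 6 5 hrK
    · linear_combination 4*h3
    · simp [hr0, h5]
    · simp [hr0, h5]
    · intro h; rw [show 8*r/5*(6*r/5) = 48*r^2/25 from by ring, h3] at h; norm_num at h
    · intro h; rw [show 8*r/5*(6*r/5) = 48*r^2/25 from by ring, h3] at h; norm_num at h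
  · refine ⟨r - s, r + s, K.sub_mem hrK hsK, K.add_mem hrK hsK, by linear_combination 2*hrs, ?_, ?_, ?_, ?_⟩
    · intro h
      apply h3
      linear_combination (1/2)*hrs + ((r+s)/2)*h
    · intro h
      apply h3
      linear_combination (1/2)*hrs + ((r-s)/2)*h
    · intro h
      apply h2
      linear_combination (1/2)*hrs - (1/2)*h
    · intro h
      apply h1
      linear_combination (1/2)*hrs + (1/2)*h

end RankAux

open RankAux in
/-- For `f = 10 x³y²` and a subfield `K ⊆ ℂ`: if `−1` is a sum of two squares in `K`
then `L_K(f) = 4`, and otherwise `L_K(f) = 5`. -/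
theorem rank_x3y2 (K : Subfield ℂ) :
    ((∃ r s : ℂ, r ∈ K ∧ s ∈ K ∧ r ^ 2 + s ^ 2 = -1) →
      Lrank K 5 (MvPolynomial.C (10 : ℂ) * X 0 ^ 3 * X 1 ^ 2) = (4 : ℕ∞)) ∧
    (¬ (∃ r s : ℂ, r ∈ K ∧ s ∈ K ∧ r ^ 2 + s ^ 2 = -1) →
      Lrank K 5 (MvPolynomial.C (10 : ℂ) * X 0 ^ 3 * X 1 ^ 2) = (5 : ℕ∞)) := by
  rw [Lrank]
  have hlow4 : ∀ n ∈ { n : ℕ∞ | ∃ r : ℕ, n = (r : ℕ∞) ∧ ∃ lam al be : Fin r → ℂ,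
      (∀ j, lam j ∈ K ∧ al j ∈ K ∧ be j ∈ K) ∧
      (MvPolynomial.C (10 : ℂ) * X 0 ^ 3 * X 1 ^ 2 : MvPolynomial (Fin 2) ℂ)
        = ∑ j, MvPolynomial.C (lam j) *
          (MvPolynomial.C (al j) * X 0 + MvPolynomial.C (be j) * X 1) ^ 5 },
      (4 : ℕ∞) ≤ n := by
    rintro n ⟨r, rfl, lam, al, be, hm, hf⟩
    by_contra hlt
    push_neg at hlt
    have hr4 : r < 4 := by exact_mod_cast hlt
    exact small_kill (by omega) lam al be hf
  constructor
  · rintro ⟨r, s, hrK, hsK, hrs⟩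
    obtain ⟨b, c, hbK, hcK, hb2, hb, hc, hb3, hb3'⟩ := good_point K r s hrK hsK hrs
    obtain ⟨lam, al, be, hm, hf⟩ := rep4 K b c hbK hcK hb2 hb hc hb3 hb3'
    refine le_antisymm (sInf_le ⟨4, by norm_num, lam, al, be, hm, hf⟩) (le_sInf hlow4)
  · intro hno
    obtain ⟨lam5, al5, be5, hm5, hf5⟩ := rep5 K
    refine le_antisymm (sInf_le ⟨5, by norm_num, lam5, al5, be5, hm5, hf5⟩) (le_sInf ?_)
    rintro n ⟨r, rfl, lam, al, be, hm, hf⟩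
    by_contra hlt
    push_neg at hlt
    have hr5 : r < 5 := by exact_mod_cast hlt
    rcases Nat.lt_or_ge r 4 with h4 | h4
    · exact small_kill (by omega) lam al be hf
    · have hre : r = 4 := by omega
      subst hre
      exact hno (four_exists K lam al be hm hf)
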